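/- Let δ be a valid perturbation profile and let x* be a feasible allocation that maximizes the perturbed objective V_δ over all feasible allocations. Then x* is a valid allocation, i.e., x* satisfies the priority requirement (PR) and is Pareto efficient (PE). -/

import Mathlib

open Finset

/-- An allocation instance: quotas, eligibility sets, and priority relations. -/
structure AllocInstance (A C : Type*) where
  quota : C → ℕ
  elig : C → Set A
  prio : C → A → A → Prop

namespace AllocInstance

variable {A C : Type*} [Fintype A] [Fintype C]

/-- Strict priority: `a ≻_c a'`. -/
def Strict (I : AllocInstance A C) (c : C) (a a' : A) : Prop :=
  I.prio c a a' ∧ ¬ I.prio c a' a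

/-- The priority relation of each category is a total preorder on its eligible set. -/
def TotalPreorder (I : AllocInstance A C) : Prop :=
  (∀ c, ∀ a ∈ I.elig c, I.prio c a a) ∧
  (∀ c, ∀ a ∈ I.elig c, ∀ a' ∈ I.elig c, ∀ a'' ∈ I.elig c,
      I.prio c a a' → I.prio c a' a'' → I.prio c a a'') ∧
  (∀ c, ∀ a ∈ I.elig c, ∀ a' ∈ I.elig c, I.prio c a a' ∨ I.prio c a' a)

/-- The priority relation of each category is a (strict) total order on its eligible
set, i.e. an antisymmetric total preorder. -/
def StrictTotalPrio (I : AllocInstance A C) : Prop :=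
  I.TotalPreorder ∧
  (∀ c, ∀ a ∈ I.elig c, ∀ a' ∈ I.elig c, I.prio c a a' → I.prio c a' a → a = a')

/-- A feasible allocation: nonnegative, eligibility (ER), quotas (QR), unit demand. -/
def Feasible (I : AllocInstance A C) (x : A → C → ℝ) : Prop :=
  (∀ a c, 0 ≤ x a c) ∧
  (∀ a c, a ∉ I.elig c → x a c = 0) ∧
  (∀ c, ∑ a, x a c ≤ (I.quota c : ℝ)) ∧
  (∀ a, ∑ c, x a c ≤ 1)

/-- The size of an allocation. -/
def V (_I : AllocInstance A C) (x : A → C → ℝ) : ℝ := ∑ a, ∑ c, x a c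

/-- Respect for priorities (PR). -/
def PR (I : AllocInstance A C) (x : A → C → ℝ) : Prop :=
  ∀ c, ∀ a ∈ I.elig c, ∀ a' ∈ I.elig c,
    I.Strict c a' a → 0 < x a c → ∑ c', x a' c' = 1

/-- Pareto efficiency (PE). -/
def PE (I : AllocInstance A C) (x : A → C → ℝ) : Prop :=
  ¬ ∃ y, I.Feasible y ∧ I.PR y ∧
    (∀ a, ∑ c, x a c ≤ ∑ c, y a c) ∧ (∃ a, ∑ c, x a c < ∑ c, y a c)

/-- A valid allocation: feasible, respecting priorities, and Pareto efficient. -/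
def Valid (I : AllocInstance A C) (x : A → C → ℝ) : Prop :=
  I.Feasible x ∧ I.PR x ∧ I.PE x

/-- An integral allocation. -/
def Integral (_I : AllocInstance A C) (x : A → C → ℝ) : Prop :=
  ∀ a c, x a c = 0 ∨ x a c = 1

/-- A valid perturbation profile: positivity, small effect, consistency. -/
def ValidPerturbation (I : AllocInstance A C) (δ : A → C → ℝ) : Prop :=
  (∀ a c, 0 < δ a c) ∧
  (∑ a, ∑ c, δ a c ≤ 1 / 2) ∧
  (∀ c, ∀ a ∈ I.elig c, ∀ a' ∈ I.elig c, (I.prio c a a' ↔ δ a' c ≥ δ a c))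

/-- The perturbed objective `V_δ`. -/
def Vd (_I : AllocInstance A C) (δ x : A → C → ℝ) : ℝ :=
  ∑ a, ∑ c, x a c * (1 - δ a c)

/-- Category stability (CS): no cyclic trade among categories in which some category
passes its allocation to a strictly higher-priority agent. -/
def CS (I : AllocInstance A C) (x : A → C → ℝ) : Prop :=
  ¬ ∃ (j : ℕ) (c : ℕ → C) (a : ℕ → A),
      2 ≤ j ∧ c j = c 0 ∧ a j = a 0 ∧
      (∀ i < j, 0 < x (a i) (c i) ∧ I.prio (c i) (a (i + 1)) (a i)) ∧
      (∃ i < j, I.Strict (c i) (a (i + 1)) (a i))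

end AllocInstance


section StmtZeroAux

open Classical

/-- Sum of an indicator over an injectively-indexed range. -/
private lemma sum_ind {β : Type*} [DecidableEq β] (m : ℕ) (F : ℕ → β)
    (hinj : ∀ i < m, ∀ j < m, F i = F j → i = j) (b : β) :
    (∑ i ∈ Finset.range m, if b = F i then (1:ℝ) else 0)
      = if ∃ i, i < m ∧ b = F i then 1 else 0 := by
  by_cases h : ∃ i, i < m ∧ b = F i
  · obtain ⟨i₀, hi₀, hb⟩ := h
    rw [if_pos ⟨i₀, hi₀, hb⟩,
      Finset.sum_eq_single_of_mem i₀ (Finset.mem_range.2 hi₀)]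
    · rw [if_pos hb]
    · intro j hj hne
      rw [if_neg]
      intro hbj
      exact hne (hinj j (Finset.mem_range.1 hj) i₀ hi₀ (hbj.symm.trans hb))
  · rw [if_neg h]
    refine Finset.sum_eq_zero fun i hi => ?_
    rw [if_neg fun hbi => h ⟨i, Finset.mem_range.1 hi, hbi⟩]

private lemma Vd_add {A C : Type*} [Fintype A] [Fintype C]
    (I : AllocInstance A C) (δ x g : A → C → ℝ) (ε : ℝ) :
    I.Vd δ (fun a c => x a c + ε * g a c)
      = I.Vd δ x + ε * ∑ a, ∑ c, g a c * (1 - δ a c) := by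
  simp only [AllocInstance.Vd, add_mul, mul_assoc, Finset.sum_add_distrib, Finset.mul_sum]

end StmtZeroAux

set_option maxHeartbeats 1000000 in
/-- any maximizer of the perturbed objective `V_δ` over feasible
allocations, for a valid perturbation `δ`, is a valid allocation (PR and PE). -/
theorem stmt0 {A C : Type*} [Fintype A] [Fintype C] (I : AllocInstance A C)
    (hpre : I.TotalPreorder) (δ : A → C → ℝ) (hδ : I.ValidPerturbation δ)
    (xstar : A → C → ℝ) (hfeas : I.Feasible xstar)
    (hmax : ∀ y, I.Feasible y → I.Vd δ y ≤ I.Vd δ xstar) :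
    I.Valid xstar := by
  classical
  obtain ⟨hδpos, hδsum, hδcons⟩ := hδ
  obtain ⟨hnn, hel, hq, hu⟩ := hfeas
  have hfeas' : I.Feasible xstar := ⟨hnn, hel, hq, hu⟩
  have hPR : I.PR xstar := by
    intro c a ha a' ha' hstrict hx
    by_contra hne
    have hlt : ∑ c', xstar a' c' < 1 := lt_of_le_of_ne (hu a') hne
    have hnprio : ¬ I.prio c a a' := hstrict.2
    have hAne : a ≠ a' := by
      rintro rfl
      exact hnprio (hpre.1 c a ha)
    have hδlt : δ a' c < δ a c :=
      not_le.1 fun h => hnprio ((hδcons c a ha a' ha').2 h)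
    set ε := min (xstar a c) (1 - ∑ c', xstar a' c') with hεdef
    have hε : 0 < ε := lt_min hx (by linarith)
    have hεx : ε ≤ xstar a c := min_le_left _ _
    have hεr : ε ≤ 1 - ∑ c', xstar a' c' := min_le_right _ _
    set g : A → C → ℝ := fun b c' =>
      if c' = c then (if b = a' then (1:ℝ) else 0) - (if b = a then 1 else 0) else 0
      with hgdef
    have hgval : ∀ b c', g b c'
        = if c' = c then (if b = a' then (1:ℝ) else 0) - (if b = a then 1 else 0) else 0 :=
      fun _ _ => rfl
    have hgrow : ∀ b, ∑ c', g b c'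
        = (if b = a' then (1:ℝ) else 0) - (if b = a then 1 else 0) := by
      intro b
      simp only [hgval]
      rw [Finset.sum_ite_eq' Finset.univ c
        (fun _ => (if b = a' then (1:ℝ) else 0) - (if b = a then 1 else 0))]
      simp
    have hgcol : ∀ c', ∑ b, g b c' = 0 := by
      intro c'
      by_cases hc : c' = c
      · simp only [hgval, if_pos hc]
        rw [Finset.sum_sub_distrib]
        rw [Finset.sum_ite_eq' Finset.univ a' (fun _ => (1:ℝ))]
        rw [Finset.sum_ite_eq' Finset.univ a (fun _ => (1:ℝ))]
        simp
      · simp [hgval, hc]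
    set z : A → C → ℝ := fun b c' => xstar b c' + ε * g b c' with hzdef
    have hzval : ∀ b c', z b c' = xstar b c' + ε * g b c' := fun _ _ => rfl
    have hzfeas : I.Feasible z := by
      refine ⟨?_, ?_, ?_, ?_⟩
      · intro b c'
        rw [hzval]
        by_cases hc : c' = c
        · by_cases hb' : b = a'
          · have hgv : g b c' = 1 := by
              have hba : ¬ b = a := fun h => hAne (h.symm.trans hb')
              simp [hgval, hc, hb', hba, hAne.symm]
            rw [hgv]
            have := hnn b c'
            linarith
          · by_cases hb : b = a
            · have hgv : g b c' = -1 := by simp [hgval, hc, hb, hb', hAne]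
              rw [hgv]
              have h1 : xstar b c' = xstar a c := by rw [hb, hc]
              linarith
            · have hgv : g b c' = 0 := by simp [hgval, hc, hb, hb']
              rw [hgv]
              have := hnn b c'
              linarith
        · have hgv : g b c' = 0 := by simp [hgval, hc]
          rw [hgv]
          have := hnn b c'
          linarith
      · intro b c' hnel
        have hx0 := hel b c' hnel
        rw [hzval, hx0]
        have hgv : g b c' = 0 := by
          by_cases hc : c' = c
          · have hba : ¬ b = a := by rintro rfl; rw [hc] at hnel; exact hnel ha
            have hba' : ¬ b = a' := by rintro rfl; rw [hc] at hnel; exact hnel ha'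
            simp [hgval, hc, hba, hba']
          · simp [hgval, hc]
        rw [hgv]
        ring
      · intro c'
        have hsum : ∑ b, z b c' = ∑ b, xstar b c' + ε * ∑ b, g b c' := by
          simp only [hzval]
          rw [Finset.sum_add_distrib, Finset.mul_sum]
        rw [hsum, hgcol, mul_zero, add_zero]
        exact hq c'
      · intro b
        have hsum : ∑ c', z b c' = ∑ c', xstar b c' + ε * ∑ c', g b c' := by
          simp only [hzval]
          rw [Finset.sum_add_distrib, Finset.mul_sum]
        rw [hsum, hgrow]
        by_cases hb' : b = a'
        · have hba : ¬ b = a := fun h => hAne (h.symm.trans hb')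
          rw [if_pos hb', if_neg hba]
          have h1 : ∑ c', xstar b c' = ∑ c', xstar a' c' := by rw [hb']
          linarith
        · by_cases hb : b = a
          · rw [if_neg hb', if_pos hb]
            have := hu b
            linarith
          · rw [if_neg hb', if_neg hb]
            have := hu b
            linarith
    have hVdz : I.Vd δ z = I.Vd δ xstar + ε * ∑ b, ∑ c', g b c' * (1 - δ b c') :=
      Vd_add I δ xstar g ε
    have hginner : ∀ b, ∑ c', g b c' * (1 - δ b c')
        = ((if b = a' then (1:ℝ) else 0) - (if b = a then 1 else 0)) * (1 - δ b c) := by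
      intro b
      simp only [hgval, ite_mul, zero_mul]
      rw [Finset.sum_ite_eq' Finset.univ c
        (fun c' => ((if b = a' then (1:ℝ) else 0) - (if b = a then 1 else 0)) * (1 - δ b c'))]
      simp
    have hgtot : ∑ b, ∑ c', g b c' * (1 - δ b c') = δ a c - δ a' c := by
      rw [Finset.sum_congr rfl fun b _ => hginner b]
      simp only [sub_mul, ite_mul, one_mul, zero_mul]
      rw [Finset.sum_sub_distrib]
      rw [Finset.sum_ite_eq' Finset.univ a' (fun b => 1 - δ b c)]
      rw [Finset.sum_ite_eq' Finset.univ a (fun b => 1 - δ b c)]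
      simp
    have hgain : I.Vd δ xstar < I.Vd δ z := by
      rw [hVdz, hgtot]
      nlinarith
    exact absurd (hmax z hzfeas) (not_le.2 hgain)
  refine ⟨hfeas', hPR, ?_⟩
  rintro ⟨y, hyfeas, -, hdom, a₀, hstr⟩
  obtain ⟨hynn, hyel, hyq, hyu⟩ := hyfeas
  set d : A → C → ℝ := fun a c => y a c - xstar a c with hddef
  have hdval : ∀ a c, d a c = y a c - xstar a c := fun _ _ => rfl
  have hr : ∀ a, 0 ≤ ∑ c, d a c := by
    intro a
    simp only [hdval]
    rw [Finset.sum_sub_distrib]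
    have := hdom a
    linarith
  have hr0 : 0 < ∑ c, d a₀ c := by
    simp only [hdval]
    rw [Finset.sum_sub_distrib]
    linarith [hstr]
  set R : A → A → Prop := fun a a' => ∃ c, 0 < d a c ∧ d a' c < 0 with hRdef
  set Reach : A → Prop := fun a => Relation.ReflTransGen R a₀ a with hReachdef
  set Sf : Finset A := Finset.univ.filter Reach with hSfdef
  have hmemS : ∀ a, a ∈ Sf ↔ Reach a := by
    intro a; rw [hSfdef, Finset.mem_filter]; simp
  set Term : A → Prop := fun a => ∃ c, 0 < d a c ∧ ∑ b, xstar b c < (I.quota c : ℝ)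
    with hTermdef
  -- Existence of a reachable terminal agent
  have hex : ∃ a, Reach a ∧ Term a := by
    by_contra hcon
    set Tf : Finset C := Finset.univ.filter (fun c => ∃ a ∈ Sf, 0 < d a c) with hTfdef
    have hmemT : ∀ c, c ∈ Tf ↔ ∃ a ∈ Sf, 0 < d a c := by
      intro c; rw [hTfdef, Finset.mem_filter]; simp
    have hsat : ∀ c ∈ Tf, (∑ b, xstar b c) = (I.quota c : ℝ) := by
      intro c hc
      obtain ⟨a, haS, hapos⟩ := (hmemT c).1 hc
      have hreach : Reach a := (hmemS a).1 haS
      have hnlt : ¬ (∑ b, xstar b c < (I.quota c : ℝ)) := by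
        intro hltq
        exact hcon ⟨a, hreach, ⟨c, hapos, hltq⟩⟩
      exact le_antisymm (hq c) (not_lt.1 hnlt)
    have ha₀S : a₀ ∈ Sf := (hmemS a₀).2 Relation.ReflTransGen.refl
    have hlow : 0 < ∑ a ∈ Sf, ∑ c ∈ Tf, d a c := by
      have h1 : ∀ a ∈ Sf, (∑ c, d a c) ≤ ∑ c ∈ Tf, d a c := by
        intro a haS
        have hsplit := Finset.sum_filter_add_sum_filter_not Finset.univ
          (fun c => ∃ a ∈ Sf, 0 < d a c) (d a)
        have h2 : ∑ c ∈ Finset.univ.filter (fun c => ¬ ∃ a ∈ Sf, 0 < d a c), d a c ≤ 0 := by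
          apply Finset.sum_nonpos
          intro c hc
          have hnc := (Finset.mem_filter.1 hc).2
          by_contra hpos
          push_neg at hpos
          exact hnc ⟨a, haS, hpos⟩
        rw [hTfdef]
        linarith
      have h3 : 0 < ∑ a ∈ Sf, ∑ c, d a c := by
        have h4 := Finset.single_le_sum (f := fun a => ∑ c, d a c)
          (fun a _ => hr a) ha₀S
        linarith
      calc (0:ℝ) < ∑ a ∈ Sf, ∑ c, d a c := h3
        _ ≤ ∑ a ∈ Sf, ∑ c ∈ Tf, d a c := Finset.sum_le_sum h1
    have hup : ∑ a ∈ Sf, ∑ c ∈ Tf, d a c ≤ 0 := by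
      rw [Finset.sum_comm]
      apply Finset.sum_nonpos
      intro c hc
      have hsub : ∑ a ∈ Sf, d a c ≤ ∑ a, d a c := by
        apply Finset.sum_le_sum_of_subset_of_nonneg (Finset.subset_univ Sf)
        intro a _ haNS
        by_contra hneg
        push_neg at hneg
        obtain ⟨a', ha'S, ha'pos⟩ := (hmemT c).1 hc
        have hra : Reach a :=
          Relation.ReflTransGen.tail ((hmemS a').1 ha'S) ⟨c, ha'pos, hneg⟩
        exact haNS ((hmemS a).2 hra)
      have heq : ∑ a, d a c = (∑ a, y a c) - ∑ a, xstar a c := by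
        simp only [hdval]; exact Finset.sum_sub_distrib _ _
      have hcq := hsat c hc
      have := hyq c
      linarith
    linarith
  obtain ⟨astar, hareach, haterm⟩ := hex
  have hpath0 : ∀ b : A, Relation.ReflTransGen R a₀ b →
      ∃ n, ∃ f : ℕ → A, f 0 = a₀ ∧ (∀ i < n, R (f i) (f (i+1))) ∧ f n = b := by
    intro b hb
    induction hb with
    | refl => exact ⟨0, fun _ => a₀, rfl, fun i h => absurd h (Nat.not_lt_zero i), rfl⟩
    | @tail b' c' h hs ih =>
      obtain ⟨n, f, h0, hsteps, hn⟩ := ih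
      refine ⟨n+1, fun i => if i ≤ n then f i else c', ?_, ?_, ?_⟩
      · simp only [Nat.zero_le, if_pos]
        exact h0
      · intro i hi
        by_cases hin : i + 1 ≤ n
        · have hi' : i ≤ n := by omega
          simp only [if_pos hin, if_pos hi']
          exact hsteps i (by omega)
        · have hieq : i = n := by omega
          show R (if i ≤ n then f i else c') (if i + 1 ≤ n then f (i+1) else c')
          rw [if_pos (show i ≤ n by omega), if_neg hin]
          have hfib : f i = b' := by rw [hieq]; exact hn
          rw [hfib]
          exact hs
      · simp only [if_neg (by omega : ¬ n + 1 ≤ n)]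
  obtain ⟨n1, f1, hf10, hf1s, hf1n⟩ := hpath0 astar hareach
  have hPred : ∃ n, ∃ f : ℕ → A, f 0 = a₀ ∧ (∀ i < n, R (f i) (f (i+1))) ∧ Term (f n) :=
    ⟨n1, f1, hf10, hf1s, by rw [hf1n]; exact haterm⟩
  set n₀ := Nat.find hPred with hn₀def
  obtain ⟨f, hf0, hfs, hfterm⟩ := Nat.find_spec hPred
  have hinj : ∀ i ≤ n₀, ∀ j ≤ n₀, f i = f j → i = j := by
    suffices h : ∀ i j, i < j → j ≤ n₀ → f i ≠ f j by
      intro i hi j hj hf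
      rcases lt_trichotomy i j with h' | h' | h'
      · exact absurd hf (h i j h' hj)
      · exact h'
      · exact absurd hf.symm (h j i h' hi)
    intro i j hij hjn hfij
    have hlt : n₀ - (j - i) < n₀ := by omega
    apply Nat.find_min hPred hlt
    refine ⟨fun m => if m ≤ i then f m else f (m + (j - i)), ?_, ?_, ?_⟩
    · simp only [Nat.zero_le, if_pos]
      exact hf0
    · intro m hm
      by_cases hmi : m + 1 ≤ i
      · have hmle : m ≤ i := by omega
        simp only [if_pos hmi, if_pos hmle]
        exact hfs m (by omega)
      · have heq1 : (if m ≤ i then f m else f (m + (j - i))) = f (m + (j - i)) := by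
          by_cases hmle : m ≤ i
          · have hmeq : m = i := by omega
            rw [if_pos hmle, hmeq, hfij]
            congr 1
            omega
          · rw [if_neg hmle]
        have heq2 : m + 1 + (j - i) = (m + (j - i)) + 1 := by omega
        simp only [heq1, if_neg hmi, heq2]
        exact hfs (m + (j - i)) (by omega)
    · have heq3 : (if n₀ - (j - i) ≤ i then f (n₀ - (j - i))
          else f (n₀ - (j - i) + (j - i))) = f n₀ := by
        by_cases hle : n₀ - (j - i) ≤ i
        · have h1 : n₀ - (j - i) = i := by omega
          have h2 : n₀ = j := by omega
          rw [if_pos hle, h1, hfij, h2]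
        · rw [if_neg hle]
          congr 1
          omega
      simp only [heq3]
      exact hfterm
  have hstepd : ∀ i, i < n₀ → ∃ c, 0 < d (f i) c ∧ d (f (i+1)) c < 0 := by
    intro i hi
    have h := hfs i hi
    simp only [hRdef] at h
    exact h
  choose cmid hcmid using hstepd
  have htermN : ∃ c, 0 < d (f n₀) c ∧ ∑ b, xstar b c < (I.quota c : ℝ) := by
    have h := hfterm
    simp only [hTermdef] at h
    exact h
  obtain ⟨cN, hcN1, hcN2⟩ := htermN
  set cfun : ℕ → C := fun i => if h : i < n₀ then cmid i h else cN with hcfundef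
  have hcpos : ∀ i ≤ n₀, 0 < d (f i) (cfun i) := by
    intro i hi
    by_cases h : i < n₀
    · simp only [hcfundef, dif_pos h]
      exact (hcmid i h).1
    · have hieq : i = n₀ := by omega
      rw [hieq]
      simp only [hcfundef, dif_neg (lt_irrefl n₀)]
      exact hcN1
  have hcneg : ∀ i < n₀, d (f (i+1)) (cfun i) < 0 := by
    intro i hi
    simp only [hcfundef, dif_pos hi]
    exact (hcmid i hi).2
  have hcun : ∑ b, xstar b (cfun n₀) < (I.quota (cfun n₀) : ℝ) := by
    simp only [hcfundef, dif_neg (lt_irrefl n₀)]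
    exact hcN2
  -- the augmentation direction g
  set g : A → C → ℝ := fun b c' =>
    (∑ i ∈ Finset.range (n₀+1), if (b, c') = (f i, cfun i) then (1:ℝ) else 0)
    - (∑ i ∈ Finset.range n₀, if (b, c') = (f (i+1), cfun i) then (1:ℝ) else 0)
    with hgdef
  have hgval : ∀ b c', g b c' =
      (∑ i ∈ Finset.range (n₀+1), if (b, c') = (f i, cfun i) then (1:ℝ) else 0)
      - (∑ i ∈ Finset.range n₀, if (b, c') = (f (i+1), cfun i) then (1:ℝ) else 0) :=
    fun _ _ => rfl
  have hinjF : ∀ i < n₀+1, ∀ j < n₀+1, (f i, cfun i) = (f j, cfun j) → i = j := by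
    intro i hi j hj h
    exact hinj i (by omega) j (by omega) (congrArg Prod.fst h)
  have hinjG : ∀ i < n₀, ∀ j < n₀, (f (i+1), cfun i) = (f (j+1), cfun j) → i = j := by
    intro i hi j hj h
    have := hinj (i+1) (by omega) (j+1) (by omega) (congrArg Prod.fst h)
    omega
  have hS1 : ∀ b c', (∑ i ∈ Finset.range (n₀+1), if (b, c') = (f i, cfun i) then (1:ℝ) else 0)
      = if ∃ i, i < n₀+1 ∧ (b, c') = (f i, cfun i) then 1 else 0 :=
    fun b c' => sum_ind (n₀+1) (fun i => (f i, cfun i)) hinjF (b, c')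
  have hS2 : ∀ b c', (∑ i ∈ Finset.range n₀, if (b, c') = (f (i+1), cfun i) then (1:ℝ) else 0)
      = if ∃ i, i < n₀ ∧ (b, c') = (f (i+1), cfun i) then 1 else 0 :=
    fun b c' => sum_ind n₀ (fun i => (f (i+1), cfun i)) hinjG (b, c')
  -- pointwise values of g
  have hgcases : ∀ b c', g b c' = 0 ∨ (g b c' = 1 ∧ 0 < d b c') ∨ (g b c' = -1 ∧ d b c' < 0) := by
    intro b c'
    rw [hgval, hS1, hS2]
    by_cases h1 : ∃ i, i < n₀+1 ∧ (b, c') = (f i, cfun i)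
    · have hd1 : 0 < d b c' := by
        obtain ⟨i, hi, he⟩ := h1
        have hb : b = f i := congrArg Prod.fst he
        have hc : c' = cfun i := congrArg Prod.snd he
        rw [hb, hc]
        exact hcpos i (by omega)
      have h2 : ¬ ∃ i, i < n₀ ∧ (b, c') = (f (i+1), cfun i) := by
        rintro ⟨j, hj, he⟩
        have hb : b = f (j+1) := congrArg Prod.fst he
        have hc : c' = cfun j := congrArg Prod.snd he
        have hd2 : d b c' < 0 := by rw [hb, hc]; exact hcneg j hj
        linarith
      rw [if_pos h1, if_neg h2]
      right; left
      exact ⟨by ring, hd1⟩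
    · rw [if_neg h1]
      by_cases h2 : ∃ i, i < n₀ ∧ (b, c') = (f (i+1), cfun i)
      · right; right
        refine ⟨by rw [if_pos h2]; ring, ?_⟩
        obtain ⟨j, hj, he⟩ := h2
        have hb : b = f (j+1) := congrArg Prod.fst he
        have hc : c' = cfun j := congrArg Prod.snd he
        rw [hb, hc]
        exact hcneg j hj
      · left
        rw [if_neg h2]
        ring
  -- row sums of g
  have hinner1 : ∀ (b aa : A) (cc : C), (∑ c', if (b, c') = (aa, cc) then (1:ℝ) else 0)
      = if b = aa then 1 else 0 := by
    intro b aa cc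
    simp only [Prod.mk.injEq]
    by_cases hb : b = aa
    · simp [hb, Finset.sum_ite_eq']
    · simp [hb]
  have hinner2 : ∀ (c' : C) (aa : A) (cc : C),
      (∑ b' : A, if (b', c') = (aa, cc) then (1:ℝ) else 0) = if c' = cc then 1 else 0 := by
    intro c' aa cc
    simp only [Prod.mk.injEq]
    by_cases hc : c' = cc
    · simp [hc, Finset.sum_ite_eq']
    · simp [hc]
  have hgrow : ∀ b, ∑ c', g b c' = if b = a₀ then 1 else 0 := by
    intro b
    simp only [hgval]
    rw [Finset.sum_sub_distrib, Finset.sum_comm, Finset.sum_comm (t := Finset.range n₀)]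
    rw [Finset.sum_congr rfl (fun i _ => hinner1 b (f i) (cfun i)),
      Finset.sum_congr rfl (fun i _ => hinner1 b (f (i+1)) (cfun i))]
    rw [sum_ind (n₀+1) f (fun i hi j hj => hinj i (by omega) j (by omega)) b,
      sum_ind n₀ (fun i => f (i+1)) (fun i hi j hj h => by
        have := hinj (i+1) (by omega) (j+1) (by omega) h; omega) b]
    by_cases hb0 : b = a₀
    · rw [if_pos hb0]
      rw [if_pos ⟨0, by omega, by rw [hb0, hf0]⟩]
      rw [if_neg ?_]
      · ring
      · rintro ⟨j, hj, hbe⟩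
        have h0j : (0:ℕ) = j + 1 := hinj 0 (by omega) (j+1) (by omega) (by rw [hf0, ← hb0, hbe])
        omega
    · rw [if_neg hb0]
      by_cases hb1 : ∃ i, i < n₀+1 ∧ b = f i
      · obtain ⟨i, hi, hbi⟩ := hb1
        have hine : i ≠ 0 := by
          rintro rfl
          exact hb0 (hbi.trans hf0)
        rw [if_pos ⟨i, hi, hbi⟩, if_pos ⟨i-1, by omega, by rw [hbi]; congr 1; omega⟩]
        ring
      · rw [if_neg hb1, if_neg ?_]
        · ring
        · rintro ⟨j, hj, hbe⟩
          exact hb1 ⟨j+1, by omega, hbe⟩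
  -- column sums of g
  have hgcol : ∀ c', ∑ b, g b c' = if c' = cfun n₀ then 1 else 0 := by
    intro c'
    simp only [hgval]
    rw [Finset.sum_sub_distrib, Finset.sum_comm, Finset.sum_comm (t := Finset.range n₀)]
    rw [Finset.sum_congr rfl (fun i _ => hinner2 c' (f i) (cfun i)),
      Finset.sum_congr rfl (fun i _ => hinner2 c' (f (i+1)) (cfun i))]
    rw [Finset.sum_range_succ]
    ring
  -- a positive step size
  haveI hne : Nonempty (A × C) := ⟨(a₀, cfun n₀)⟩
  set m1 := Finset.inf' (Finset.univ : Finset (A × C)) Finset.univ_nonempty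
    (fun p => if d p.1 p.2 < 0 then -d p.1 p.2 else 1) with hm1def
  have hm1pos : 0 < m1 := by
    rw [hm1def, Finset.lt_inf'_iff]
    intro p _
    by_cases h : d p.1 p.2 < 0
    · rw [if_pos h]; linarith
    · rw [if_neg h]; norm_num
  have hm1le : ∀ b c', d b c' < 0 → m1 ≤ -d b c' := by
    intro b c' h
    have h2 := Finset.inf'_le (s := (Finset.univ : Finset (A × C)))
      (fun p => if d p.1 p.2 < 0 then -d p.1 p.2 else 1) (Finset.mem_univ (b, c'))
    rw [if_pos h] at h2
    exact h2
  have hrow0 : ∑ c', xstar a₀ c' < 1 := by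
    have := hyu a₀
    linarith
  set ε := min (1 - ∑ c', xstar a₀ c')
    (min ((I.quota (cfun n₀) : ℝ) - ∑ b, xstar b (cfun n₀)) m1) with hεdef
  have hεpos : 0 < ε := lt_min (by linarith) (lt_min (by linarith) hm1pos)
  have hε1 : ε ≤ 1 - ∑ c', xstar a₀ c' := min_le_left _ _
  have hε2 : ε ≤ (I.quota (cfun n₀) : ℝ) - ∑ b, xstar b (cfun n₀) :=
    le_trans (min_le_right _ _) (min_le_left _ _)
  have hε3 : ∀ b c', d b c' < 0 → ε ≤ -d b c' :=
    fun b c' h => le_trans (min_le_right _ _) (le_trans (min_le_right _ _) (hm1le b c' h))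
  -- the improved allocation
  set z : A → C → ℝ := fun b c' => xstar b c' + ε * g b c' with hzdef
  have hzval : ∀ b c', z b c' = xstar b c' + ε * g b c' := fun _ _ => rfl
  have hzfeas : I.Feasible z := by
    refine ⟨?_, ?_, ?_, ?_⟩
    · intro b c'
      rw [hzval]
      rcases hgcases b c' with h | ⟨h, hd⟩ | ⟨h, hd⟩
      · rw [h]
        have := hnn b c'
        linarith
      · rw [h]
        have := hnn b c'
        linarith
      · rw [h]
        have h1 := hε3 b c' hd
        have h2 := hynn b c'
        have h3 : d b c' = y b c' - xstar b c' := hdval b c'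
        linarith
    · intro b c' hnel
      have hx0 := hel b c' hnel
      have hy0 := hyel b c' hnel
      have hd0 : d b c' = 0 := by rw [hdval, hx0, hy0]; ring
      rcases hgcases b c' with h | ⟨h, hd⟩ | ⟨h, hd⟩
      · rw [hzval, h, hx0]; ring
      · rw [hd0] at hd; linarith
      · rw [hd0] at hd; linarith
    · intro c'
      have hsum : ∑ b, z b c' = ∑ b, xstar b c' + ε * ∑ b, g b c' := by
        simp only [hzval]
        rw [Finset.sum_add_distrib, Finset.mul_sum]
      rw [hsum, hgcol]
      by_cases hc : c' = cfun n₀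
      · rw [if_pos hc, mul_one]
        have h1 : ∑ b, xstar b c' = ∑ b, xstar b (cfun n₀) := by rw [hc]
        have h2 : (I.quota c' : ℝ) = (I.quota (cfun n₀) : ℝ) := by rw [hc]
        rw [h1, h2]
        linarith
      · rw [if_neg hc, mul_zero, add_zero]
        exact hq c'
    · intro b
      have hsum : ∑ c', z b c' = ∑ c', xstar b c' + ε * ∑ c', g b c' := by
        simp only [hzval]
        rw [Finset.sum_add_distrib, Finset.mul_sum]
      rw [hsum, hgrow]
      by_cases hb : b = a₀
      · rw [if_pos hb, mul_one]
        have h1 : ∑ c', xstar b c' = ∑ c', xstar a₀ c' := by rw [hb]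
        rw [h1]
        linarith
      · rw [if_neg hb, mul_zero, add_zero]
        exact hu b
  -- the perturbed objective strictly increases
  have hsumg : ∑ b, ∑ c', g b c' = 1 := by
    rw [Finset.sum_congr rfl (fun b _ => hgrow b)]
    rw [Finset.sum_ite_eq' Finset.univ a₀ (fun _ => (1:ℝ))]
    simp
  have hsumgd : ∑ b, ∑ c', g b c' * δ b c' ≤ 1/2 := by
    calc ∑ b, ∑ c', g b c' * δ b c' ≤ ∑ b, ∑ c', δ b c' := by
          apply Finset.sum_le_sum
          intro b _
          apply Finset.sum_le_sum
          intro c' _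
          have hδ := le_of_lt (hδpos b c')
          rcases hgcases b c' with h | ⟨h, -⟩ | ⟨h, -⟩ <;> rw [h] <;> nlinarith
      _ ≤ 1/2 := hδsum
  have hVdz : I.Vd δ z = I.Vd δ xstar + ε * ∑ b, ∑ c', g b c' * (1 - δ b c') :=
    Vd_add I δ xstar g ε
  have hgain : (1:ℝ)/2 ≤ ∑ b, ∑ c', g b c' * (1 - δ b c') := by
    have hsplit : ∑ b, ∑ c', g b c' * (1 - δ b c')
        = (∑ b, ∑ c', g b c') - ∑ b, ∑ c', g b c' * δ b c' := by
      simp only [mul_sub, mul_one]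
      rw [← Finset.sum_sub_distrib]
      exact Finset.sum_congr rfl fun b _ => Finset.sum_sub_distrib _ _
    rw [hsplit, hsumg]
    linarith
  have hfinal : I.Vd δ xstar < I.Vd δ z := by
    have h1 : (0:ℝ) < ε * ∑ b, ∑ c', g b c' * (1 - δ b c') :=
      mul_pos hεpos (lt_of_lt_of_le (by norm_num) hgain)
    rw [hVdz]
    linarith
  exact absurd (hmax z hzfeas) (not_le.2 hfinal)
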